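/- If T is a tree, then V(T) is the only PSD fort of T; consequently zpir(T) = ZpIR(T) = 1. -/

import Mathlib

/-- A standard fort: a nonempty set `F` such that no vertex outside `F` has exactly one
neighbor in `F`. -/
def stdFort {V : Type*} (G : SimpleGraph V) (F : Set V) : Prop :=
  F.Nonempty ∧ ∀ v ∉ F, (G.neighborSet v ∩ F).ncard ≠ 1

/-- The vertex set of the connected component of `u` in the subgraph induced by `F`. -/
def compOf {V : Type*} (G : SimpleGraph V) (F : Set V) (u : F) : Set V :=
  {w | ∃ hw : w ∈ F, (G.induce F).Reachable ⟨w, hw⟩ u}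

/-- A PSD fort: a nonempty set each of whose induced connected components is a standard
fort of `G`. -/
def psdFort {V : Type*} (G : SimpleGraph V) (F : Set V) : Prop :=
  F.Nonempty ∧ ∀ u : F, stdFort G (compOf G F u)

/-- `S` is PSD-irredundant if every element of `S` has a private PSD fort. -/
def psdIrr {V : Type*} (G : SimpleGraph V) (S : Set V) : Prop :=
  ∀ u ∈ S, ∃ F : Set V, psdFort G F ∧ S ∩ F = {u}

section aux

variable {V : Type*} {G : SimpleGraph V}

lemma mem_compOf_self (F : Set V) (u : F) : (u : V) ∈ compOf G F u :=
  ⟨u.2, by exact SimpleGraph.Reachable.refl _⟩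

/-- Between any two members of a component there is a path all of whose vertices stay in
the component. -/
lemma exists_path_in_compOf (F : Set V) (u : F) {a b : V}
    (ha : a ∈ compOf G F u) (hb : b ∈ compOf G F u) :
    ∃ p : G.Walk a b, p.IsPath ∧ ∀ x ∈ p.support, x ∈ compOf G F u := by
  classical
  obtain ⟨haF, hra⟩ := ha
  obtain ⟨hbF, hrb⟩ := hb
  obtain ⟨pa⟩ := hra
  obtain ⟨pb⟩ := hrb.symm
  set q : (G.induce F).Walk ⟨a, haF⟩ ⟨b, hbF⟩ := pa.append pb with hq
  have hsup : ∀ y ∈ q.support, (y : V) ∈ compOf G F u := by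
    intro y hy
    rw [hq, SimpleGraph.Walk.mem_support_append_iff] at hy
    rcases hy with hy | hy
    · exact ⟨y.2, by simpa using (pa.dropUntil y hy).reachable⟩
    · exact ⟨y.2, by simpa using ((pb.takeUntil y hy).reverse).reachable⟩
  set w : G.Walk a b := q.map (SimpleGraph.Embedding.induce F).toHom with hw
  have hwsup : ∀ x ∈ w.support, x ∈ compOf G F u := by
    intro x hx
    change x ∈ (q.map (SimpleGraph.Embedding.induce F).toHom).support at hx
    rw [SimpleGraph.Walk.support_map, List.mem_map] at hx
    obtain ⟨y, hy, rfl⟩ := hx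
    exact hsup y hy
  exact ⟨w.toPath, w.toPath.2, fun x hx => hwsup x (SimpleGraph.Walk.support_toPath_subset w hx)⟩

end aux

theorem stmt15 {V : Type*} [Fintype V] (T : SimpleGraph V) (hT : T.IsTree) :
    (∀ F : Set V, psdFort T F → F = Set.univ) ∧
      sInf {n | ∃ S : Set V,
        (psdIrr T S ∧ ∀ S' : Set V, S ⊂ S' → ¬ psdIrr T S') ∧ S.ncard = n} = 1 ∧
      sSup {n | ∃ S : Set V,
        (psdIrr T S ∧ ∀ S' : Set V, S ⊂ S' → ¬ psdIrr T S') ∧ S.ncard = n} = 1 := by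
  classical
  have hconn := hT.isConnected
  -- Part 1: every PSD fort is the whole vertex set.
  have part1 : ∀ F : Set V, psdFort T F → F = Set.univ := by
    intro F hF
    obtain ⟨u0, hu0⟩ := hF.1
    set u : F := ⟨u0, hu0⟩
    set C := compOf T F u with hC
    have hstd := hF.2 u
    -- Vertices outside C have no neighbors in C (subsingleton by tree, ≠ 1 by fort).
    have hclosed : ∀ v ∉ C, T.neighborSet v ∩ C = ∅ := by
      intro v hv
      by_contra hne
      obtain ⟨a, ha⟩ := Set.nonempty_iff_ne_empty.mpr hne
      have hsingle : T.neighborSet v ∩ C = {a} := by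
        refine Set.eq_singleton_iff_unique_mem.mpr ⟨ha, fun b hb => ?_⟩
        by_contra hab
        -- two distinct neighbors a b in C; build two distinct paths from b to a
        obtain ⟨p, hp, hpsup⟩ := exists_path_in_compOf F u hb.2 ha.2
        have hba : b ≠ a := hab
        have hvb : v ≠ b := fun h => hv (h ▸ hb.2)
        have hva : v ≠ a := fun h => hv (h ▸ ha.2)
        set p2 : T.Walk b a :=
          SimpleGraph.Walk.cons hb.1.symm (SimpleGraph.Walk.cons ha.1 SimpleGraph.Walk.nil)
          with hp2
        have hp2path : p2.IsPath := by
          rw [hp2]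
          rw [SimpleGraph.Walk.isPath_def]
          show [b, v, a].Nodup
          simp [hba, hvb.symm, hva]
        have := (hT.existsUnique_path b a).unique hp hp2path
        have hvmem : v ∈ p.support := by
          rw [this, hp2]; simp
        exact hv (hpsup v hvmem)
      exact hstd.2 v hv (by rw [hsingle, Set.ncard_singleton])
    -- C is closed under adjacency, hence equals univ by connectivity.
    have hadj : ∀ {w x : V}, w ∈ C → T.Adj w x → x ∈ C := by
      intro w x hw hwx
      by_contra hx
      have hmem : w ∈ T.neighborSet x ∩ C := ⟨hwx.symm, hw⟩
      rw [hclosed x hx] at hmem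
      exact hmem
    have hCuniv : C = Set.univ := by
      have hwalk : ∀ {a b : V} (p : T.Walk a b), a ∈ C → b ∈ C := by
        intro a b p
        induction p with
        | nil => exact id
        | cons h _ ih => exact fun ha => ih (hadj ha h)
      refine Set.eq_univ_of_forall fun x => ?_
      obtain ⟨p⟩ := hconn.preconnected u0 x
      exact hwalk p (mem_compOf_self (G := T) F u)
    have : (Set.univ : Set V) ⊆ F := hCuniv ▸ fun w hw => hw.1
    exact Set.eq_univ_of_univ_subset this
  -- univ is a PSD fort
  have huniv : psdFort T Set.univ := by
    have hcomp : ∀ u : (Set.univ : Set V), compOf T Set.univ u = Set.univ := by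
      intro u
      refine Set.eq_univ_of_forall fun w => ?_
      refine ⟨Set.mem_univ w, ?_⟩
      have hr : T.Reachable w u := hconn.preconnected w u
      have := hr.map (T.induceUnivIso).symm.toHom
      convert this using 2 <;> rfl
    obtain ⟨u0⟩ := hconn.nonempty
    refine ⟨⟨u0, Set.mem_univ u0⟩, fun u => ?_⟩
    rw [hcomp u]
    exact ⟨⟨u0, Set.mem_univ u0⟩, fun v hv => absurd (Set.mem_univ v) hv⟩
  -- The set of cardinalities of maximal PSD-irredundant sets is {1}.
  set K := {n | ∃ S : Set V,
      (psdIrr T S ∧ ∀ S' : Set V, S ⊂ S' → ¬ psdIrr T S') ∧ S.ncard = n} with hK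
  obtain ⟨u0⟩ := hconn.nonempty
  have hsingIrr : ∀ u : V, psdIrr T {u} := by
    intro u v hv
    rw [Set.mem_singleton_iff] at hv
    subst hv
    exact ⟨Set.univ, huniv, by simp⟩
  have hKeq : K = {1} := by
    apply Set.eq_singleton_iff_unique_mem.mpr
    constructor
    · refine ⟨{u0}, ⟨hsingIrr u0, ?_⟩, Set.ncard_singleton u0⟩
      intro S' hS' hirr
      obtain ⟨v, hvS, hvne⟩ := Set.exists_of_ssubset hS'
      have hu0S : u0 ∈ S' := hS'.1 rfl
      obtain ⟨F, hF, hpriv⟩ := hirr u0 hu0S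
      rw [part1 F hF, Set.inter_univ] at hpriv
      exact hvne (hpriv ▸ hvS)
    · rintro n ⟨S, ⟨hirr, hmax⟩, rfl⟩
      rcases Set.eq_empty_or_nonempty S with rfl | ⟨u, hu⟩
      · exact absurd (hsingIrr u0) (hmax {u0} (Set.empty_ssubset.mpr ⟨u0, rfl⟩))
      · obtain ⟨F, hF, hpriv⟩ := hirr u hu
        rw [part1 F hF, Set.inter_univ] at hpriv
        rw [hpriv, Set.ncard_singleton]
  refine ⟨part1, ?_, ?_⟩ <;> rw [hKeq]
  · exact csInf_singleton 1
  · exact csSup_singleton 1
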